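/- arXiv:1302.1174 — 2 statements merged into one kernel-verified Lean document; each statement's English description precedes it below -/
import Mathlib

section
/- The angle θ = arccos(−2/3) appearing in the Boerdijk–Coxeter helix is not a rational multiple of π; that is, arccos(−2/3)/π is irrational. Consequently there is no positive integer n with n·θ an integer multiple of 2π, so the BC helix has no non-trivial rotational symmetry about its axis. -/
open Matrix

noncomputable section

private def bcA : ℕ → ℤ
  | 0 => 1
  | 1 => -2
  | (n+2) => -4 * bcA (n+1) - 9 * bcA n

private lemma bcA_cos (θ : ℝ) (hθ : Real.cos θ = -2/3) :
    ∀ n : ℕ, (bcA n : ℝ) = 3 ^ n * Real.cos (n * θ) := by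
  intro n
  induction n using Nat.strong_induction_on with
  | _ n ih =>
    match n with
    | 0 => simp [bcA]
    | 1 => simp [bcA, hθ]; ring
    | (m+2) =>
      have h1 := ih (m+1) (by omega)
      have h0 := ih m (by omega)
      have key : Real.cos ((m+2 : ℕ) * θ) =
          2 * Real.cos θ * Real.cos ((m+1 : ℕ) * θ) - Real.cos ((m : ℕ) * θ) := by
        have e1 : ((m+2 : ℕ) : ℝ) * θ = ((m+1 : ℕ) : ℝ) * θ + θ := by push_cast; ring
        have e2 : ((m : ℕ) : ℝ) * θ = ((m+1 : ℕ) : ℝ) * θ - θ := by push_cast; ring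
        rw [e1, e2, Real.cos_add, Real.cos_sub]; ring
      rw [show bcA (m+2) = -4 * bcA (m+1) - 9 * bcA m from rfl]
      push_cast at key h1 h0 ⊢
      rw [h1, h0, key, hθ]
      ring

private lemma bcA_not_dvd : ∀ n : ℕ, ¬ (3 : ℤ) ∣ bcA n := by
  have key : ∀ n : ℕ, ¬ (3:ℤ) ∣ bcA n ∧ ¬ (3:ℤ) ∣ bcA (n+1) := by
    intro n
    induction n with
    | zero => constructor <;> decide
    | succ m ih =>
      refine ⟨ih.2, ?_⟩
      rw [show bcA (m+2) = -4 * bcA (m+1) - 9 * bcA m from rfl]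
      intro h
      exact ih.2 (by omega : (3:ℤ) ∣ bcA (m+1))
  exact fun n => (key n).1

theorem bc_helix_angle_irrational :
    Irrational (Real.arccos (-2/3) / Real.pi) ∧
    ∀ n : ℕ, 0 < n → ¬ ∃ k : ℤ, (n : ℝ) * Real.arccos (-2/3) = (k : ℝ) * (2 * Real.pi) := by
  set θ := Real.arccos (-2/3) with hθdef
  have hcos : Real.cos θ = -2/3 := Real.cos_arccos (by norm_num) (by norm_num)
  constructor
  · intro ⟨r, hr⟩
    have hpi : Real.pi ≠ 0 := Real.pi_ne_zero
    have hθ : θ = (r : ℝ) * Real.pi := by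
      field_simp at hr
      linarith [hr]
    set q := r.den with hq
    have hq1 : 1 ≤ q := r.pos
    have hqθ : (q : ℝ) * θ = (r.num : ℝ) * Real.pi := by
      rw [hθ]
      rw [show ((q:ℝ) * ((r:ℝ) * Real.pi)) = ((q:ℝ) * (r:ℝ)) * Real.pi by ring]
      congr 1
      rw [hq]
      rw [Rat.cast_def]
      field_simp
    have hcos2 : Real.cos ((q : ℝ) * θ) ^ 2 = 1 := by
      rw [hqθ]
      have h2 : Real.cos (2 * ((r.num:ℝ) * Real.pi)) = 1 := by
        rw [show 2 * ((r.num:ℝ) * Real.pi) = (r.num:ℝ) * (2 * Real.pi) by ring]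
        exact Real.cos_int_mul_two_pi r.num
      have := Real.cos_sq ((r.num : ℝ) * Real.pi)
      rw [show (2:ℝ) * ((r.num:ℝ)*Real.pi) = 2*((r.num:ℝ)*Real.pi) from rfl] at h2
      rw [this, h2]; norm_num
    have ha := bcA_cos θ hcos q
    have hsq : (bcA q : ℝ) ^ 2 = (3 : ℝ) ^ (2 * q) := by
      rw [ha, mul_pow, hcos2, mul_one, ← pow_mul, mul_comm q 2]
    have hsqZ : (bcA q) ^ 2 = (3 : ℤ) ^ (2 * q) := by exact_mod_cast hsq
    have hdvd : (3 : ℤ) ∣ bcA q := by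
      have : (3:ℤ) ∣ (bcA q) ^ 2 := by
        rw [hsqZ]
        exact dvd_pow_self 3 (by omega)
      exact Int.Prime.dvd_pow' (by norm_num) this
    exact bcA_not_dvd q hdvd
  · rintro n hn ⟨k, hk⟩
    have hcos1 : Real.cos ((n : ℝ) * θ) = 1 := by
      rw [hk]
      exact Real.cos_int_mul_two_pi k
    have ha := bcA_cos θ hcos n
    rw [hcos1, mul_one] at ha
    have haZ : bcA n = (3 : ℤ) ^ n := by exact_mod_cast ha
    exact bcA_not_dvd n (haZ ▸ dvd_pow_self 3 (by omega))
end
end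

section
/- Let s_n = ((3√3/10) cos(nθ), (3√3/10) sin(nθ), n/√10) for n ∈ ℤ, where θ = arccos(−2/3). Then for every n ∈ ℤ and every k ∈ {1, 2, 3}, the Euclidean distance between s_n and s_{n+k} equals 1. In particular, every four consecutive points s_n, s_{n+1}, s_{n+2}, s_{n+3} form a regular tetrahedron of edge length 1. -/
open Matrix

noncomputable section

noncomputable def euclDist (a b : Fin 3 → ℝ) : ℝ :=
  Real.sqrt (∑ i, (a i - b i) ^ 2)

/-- The points of the unit-edge Boerdijk–Coxeter helix. -/
noncomputable def bcPoint (n : ℤ) : Fin 3 → ℝ :=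
  ![3*Real.sqrt 3/10 * Real.cos ((n : ℝ) * Real.arccos (-2/3)),
    3*Real.sqrt 3/10 * Real.sin ((n : ℝ) * Real.arccos (-2/3)),
    (n : ℝ)/Real.sqrt 10]

lemma bc_key (x y : ℝ) :
    (3*Real.sqrt 3/10 * Real.cos x - 3*Real.sqrt 3/10 * Real.cos y)^2
      + (3*Real.sqrt 3/10 * Real.sin x - 3*Real.sqrt 3/10 * Real.sin y)^2
    = 27/50 * (1 - Real.cos (x - y)) := by
  have h3 : Real.sqrt 3 ^ 2 = 3 := Real.sq_sqrt (by norm_num)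
  have hx := Real.sin_sq_add_cos_sq x
  have hy := Real.sin_sq_add_cos_sq y
  rw [Real.cos_sub]
  nlinarith [hx, hy, h3]

theorem bc_helix_unit_edges :
    ∀ n k : ℤ, (k = 1 ∨ k = 2 ∨ k = 3) → euclDist (bcPoint n) (bcPoint (n + k)) = 1 := by
  intro n k hk
  set θ := Real.arccos (-2/3) with hθ
  have hcθ : Real.cos θ = -2/3 := Real.cos_arccos (by norm_num) (by norm_num)
  have h10 : Real.sqrt 10 ^ 2 = 10 := Real.sq_sqrt (by norm_num)
  have h10ne : Real.sqrt 10 ≠ 0 := by positivity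
  have hz : ((n : ℝ)/Real.sqrt 10 - ((n : ℝ) + (k : ℝ))/Real.sqrt 10)^2 = (k : ℝ)^2/10 := by
    field_simp
    rw [h10]; ring
  have hcos : Real.cos ((n : ℝ) * θ - ((n : ℝ) + (k : ℝ)) * θ) = Real.cos ((k : ℝ) * θ) := by
    rw [show (n : ℝ) * θ - ((n : ℝ) + (k : ℝ)) * θ = -((k : ℝ) * θ) by ring, Real.cos_neg]
  have hsum : (∑ i, (bcPoint n i - bcPoint (n + k) i) ^ 2) = 1 := by
    simp only [bcPoint, Fin.sum_univ_three, Matrix.cons_val_zero, Matrix.cons_val_one,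
      Matrix.head_cons, Matrix.cons_val_two, Matrix.tail_cons, Int.cast_add]
    rw [show ((n : ℝ) + (k : ℝ)) * θ = ((n : ℝ) + (k : ℝ)) * θ from rfl]
    have := bc_key ((n : ℝ) * θ) (((n : ℝ) + (k : ℝ)) * θ)
    rw [show ((n:ℝ) * θ - ((n:ℝ)+(k:ℝ)) * θ) = -((k:ℝ)*θ) by ring, Real.cos_neg] at this
    rw [this, hz]
    rcases hk with h | h | h <;> subst h
    · push_cast
      rw [one_mul, hcθ]; norm_num
    · push_cast
      rw [Real.cos_two_mul, hcθ]; norm_num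
    · push_cast
      rw [Real.cos_three_mul, hcθ]; norm_num
  rw [euclDist, hsum, Real.sqrt_one]
end
end
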